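/- arXiv:2106.02966 — 3 statements merged into one kernel-verified Lean document; each statement's English description precedes it below -/
import Mathlib

section
/- (Edge regularity identity.) Fix m ≥ 3 and let μ ∈ Opt(m). Then for every edge e ∈ supp μ, m · β(μ; m) · μ(e) = Σ_{C : e ∈ E(C)} μ(C), where the sum is over all unlabeled m-cycles C in the support graph G_μ containing the edge e. -/
open Finset

/-- The cyclic successor of an index in `Fin m`. -/
def cnext {m : ℕ} (i : Fin m) : Fin m := ⟨(i.1 + 1) % m, Nat.mod_lt _ i.pos⟩

/-- `μ` is a probability mass on the 2-element subsets of `X`: it is nonnegative,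
vanishes on the diagonal, and has total mass 1. -/
def IsProbMass {X : Type*} [Fintype X] [DecidableEq X] (μ : Sym2 X → ℝ) : Prop :=
  (∀ e, 0 ≤ μ e) ∧ (∀ e : Sym2 X, e.IsDiag → μ e = 0) ∧ (∑ e : Sym2 X, μ e) = 1

/-- The weight `μ(C)` of the labeled cycle `f 0, f 1, ..., f (m-1), f 0`. -/
def cycleWeight {X : Type*} (μ : Sym2 X → ℝ) {m : ℕ} (f : Fin m → X) : ℝ :=
  ∏ i : Fin m, μ s(f i, f (cnext i))

/-- `β(μ; m)`: the sum of `μ(C)` over all unlabeled `m`-cycles `C` in the complete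
graph on `X`, computed as the sum over labeled cycles divided by `2m` (each unlabeled
`m`-cycle has exactly `2m` labelings). -/
noncomputable def beta {X : Type*} [Fintype X] [DecidableEq X] (μ : Sym2 X → ℝ) (m : ℕ) : ℝ :=
  (∑ f : Fin m → X, if Function.Injective f then cycleWeight μ f else 0) / (2 * m)

/-- `β(m)`: the supremum of `β(μ; m)` over all probability masses `μ` on the
2-element subsets of a finite set (every finite set being a copy of some `Fin n`). -/
noncomputable def betaSup (m : ℕ) : ℝ :=
  sSup {b : ℝ | ∃ (n : ℕ) (μ : Sym2 (Fin n) → ℝ), IsProbMass μ ∧ b = beta μ m}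

/-- The weighted degree `μ̄(x) = ∑_{y ≠ x} μ(xy)`. -/
noncomputable def wdeg {X : Type*} [Fintype X] [DecidableEq X] (μ : Sym2 X → ℝ) (x : X) : ℝ :=
  ∑ y ∈ Finset.univ.filter (· ≠ x), μ s(x, y)

/-- The support graph `G_μ`, whose edges are the pairs of positive mass. -/
def supportGraph {X : Type*} (μ : Sym2 X → ℝ) : SimpleGraph X where
  Adj x y := x ≠ y ∧ 0 < μ s(x, y)
  symm := ⟨fun x y h => ⟨h.1.symm, by rw [Sym2.eq_swap]; exact h.2⟩⟩
  loopless := ⟨fun x h => h.1 rfl⟩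

section Aux

variable {X : Type*} [Fintype X] [DecidableEq X]

/-- numerator of beta -/
noncomputable def Fnum (μ : Sym2 X → ℝ) (m : ℕ) : ℝ :=
  ∑ f : Fin m → X, if Function.Injective f then cycleWeight μ f else 0

lemma beta_eq_Fnum (μ : Sym2 X → ℝ) (m : ℕ) : beta μ m = Fnum μ m / (2 * m) := rfl

/-- partial derivative of Fnum in direction e -/
noncomputable def Dpart (μ : Sym2 X → ℝ) (m : ℕ) (e : Sym2 X) : ℝ :=
  ∑ f : Fin m → X, if Function.Injective f then
    ∑ i : Fin m, (if s(f i, f (cnext i)) = e then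
      ∏ j ∈ Finset.univ.erase i, μ s(f j, f (cnext j)) else 0)
  else 0

lemma sum_ite_eq_aux (μ : Sym2 X → ℝ) (E : Sym2 X) (P : ℝ) :
    (∑ x : Sym2 X, if E = x then μ x * P else 0) = μ E * P := by simp

lemma euler (μ : Sym2 X → ℝ) (m : ℕ) :
    ∑ e : Sym2 X, μ e * Dpart μ m e = m * Fnum μ m := by
  unfold Dpart Fnum
  simp only [Finset.mul_sum]
  rw [Finset.sum_comm]
  refine Finset.sum_congr rfl fun f _ => ?_
  by_cases hf : Function.Injective f
  · simp only [hf, if_true]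
    simp only [Finset.mul_sum]
    rw [Finset.sum_comm]
    have : ∀ i : Fin m,
        (∑ e : Sym2 X, μ e * if s(f i, f (cnext i)) = e then
          ∏ j ∈ Finset.univ.erase i, μ s(f j, f (cnext j)) else 0) = cycleWeight μ f := by
      intro i
      simp only [mul_ite, mul_zero]
      rw [sum_ite_eq_aux μ (s(f i, f (cnext i)))
        (∏ j ∈ Finset.univ.erase i, μ s(f j, f (cnext j)))]
      exact Finset.mul_prod_erase Finset.univ (fun j => μ s(f j, f (cnext j))) (Finset.mem_univ i)
    rw [Finset.sum_congr rfl fun i _ => this i]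
    simp [Finset.card_univ]
  · simp [hf]


lemma cnext_cnext_ne {m : ℕ} (hm : 3 ≤ m) (j : Fin m) : cnext (cnext j) ≠ j := by
  intro hcc
  have hv : ((j.1 + 1) % m + 1) % m = j.1 := congrArg Fin.val hcc
  have hjm := j.2
  rcases Nat.lt_or_ge (j.1 + 1) m with h | h
  · rw [Nat.mod_eq_of_lt h] at hv
    rcases Nat.lt_or_ge (j.1 + 1 + 1) m with h' | h'
    · rw [Nat.mod_eq_of_lt h'] at hv; omega
    · have he : j.1 + 1 + 1 = m := by omega
      rw [he, Nat.mod_self] at hv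
      omega
  · have h1 : j.1 + 1 = m := by omega
    rw [h1, Nat.mod_self, Nat.mod_eq_of_lt (by omega : 0 + 1 < m)] at hv
    omega

/-- the edges of an injective cycle are pairwise distinct (m ≥ 3) -/
lemma edges_inj {m : ℕ} (hm : 3 ≤ m) {f : Fin m → X} (hf : Function.Injective f)
    {i j : Fin m} (h : s(f i, f (cnext i)) = s(f j, f (cnext j))) : i = j := by
  rw [Sym2.eq_iff] at h
  rcases h with ⟨h1, _⟩ | ⟨h1, h2⟩
  · exact hf h1
  · exfalso
    have hij : i = cnext j := hf h1
    have hji : cnext i = j := hf h2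
    rw [hij] at hji
    exact cnext_cnext_ne hm j hji

/-- `μ(e) · Dpart(e)` equals the sum over support cycles through `e`. -/
lemma mu_mul_Dpart {m : ℕ} (hm : 3 ≤ m) (μ : Sym2 X → ℝ) (hpos : ∀ e, 0 ≤ μ e) (e : Sym2 X) :
    μ e * Dpart μ m e =
      ∑ f : Fin m → X, if Function.Injective f ∧ (∀ i, 0 < μ s(f i, f (cnext i))) ∧
          (∃ i, s(f i, f (cnext i)) = e) then cycleWeight μ f else 0 := by
  unfold Dpart
  rw [Finset.mul_sum]
  refine Finset.sum_congr rfl fun f _ => ?_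
  by_cases hf : Function.Injective f
  · simp only [hf, if_true, true_and]
    have hterm : ∀ i : Fin m, (if s(f i, f (cnext i)) = e then
        ∏ j ∈ Finset.univ.erase i, μ s(f j, f (cnext j)) else 0) * μ e =
        (if s(f i, f (cnext i)) = e then cycleWeight μ f else 0) := by
      intro i
      by_cases hi : s(f i, f (cnext i)) = e
      · rw [if_pos hi, if_pos hi, ← hi, mul_comm]
        exact Finset.mul_prod_erase Finset.univ (fun j => μ s(f j, f (cnext j)))
          (Finset.mem_univ i)
      · rw [if_neg hi, if_neg hi, zero_mul]
    rw [mul_comm, Finset.sum_mul, Finset.sum_congr rfl fun i _ => hterm i]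
    by_cases hex : ∃ i, s(f i, f (cnext i)) = e
    · obtain ⟨i₀, hi₀⟩ := hex
      rw [Finset.sum_eq_single i₀]
      · rw [if_pos hi₀]
        by_cases hap : ∀ i, 0 < μ s(f i, f (cnext i))
        · rw [if_pos ⟨hap, ⟨i₀, hi₀⟩⟩]
        · rw [if_neg (by tauto)]
          push_neg at hap
          obtain ⟨i₁, hi₁⟩ := hap
          have hz : μ s(f i₁, f (cnext i₁)) = 0 := le_antisymm hi₁ (hpos _)
          exact Finset.prod_eq_zero (Finset.mem_univ i₁) hz
      · intro b _ hb
        refine if_neg fun hb' => hb ?_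
        exact edges_inj hm hf (hb'.trans hi₀.symm)
      · intro h; exact absurd (Finset.mem_univ _) h
    · rw [if_neg (by tauto)]
      refine Finset.sum_eq_zero fun i _ => if_neg fun hi => hex ⟨i, hi⟩
  · simp [hf]

/-- derivative of the numerator along a direction ν, at t = 0 -/
lemma hasDerivAt_Fnum (μ ν : Sym2 X → ℝ) (m : ℕ) :
    HasDerivAt (fun t : ℝ => Fnum (fun e => μ e + t * ν e) m)
      (∑ f : Fin m → X, if Function.Injective f then
        ∑ i : Fin m, (∏ j ∈ Finset.univ.erase i, μ s(f j, f (cnext j))) *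
          ν s(f i, f (cnext i))
      else 0) 0 := by
  unfold Fnum
  apply HasDerivAt.fun_sum
  intro f _
  by_cases hf : Function.Injective f
  · simp only [hf, if_true]
    have h1 : ∀ i ∈ (Finset.univ : Finset (Fin m)),
        HasDerivAt (fun t : ℝ => μ s(f i, f (cnext i)) + t * ν s(f i, f (cnext i)))
          (ν s(f i, f (cnext i))) 0 := by
      intro i _
      simpa using ((hasDerivAt_id (0:ℝ)).mul_const (ν s(f i, f (cnext i)))).const_add
        (μ s(f i, f (cnext i)))
    have h2 := HasDerivAt.fun_finsetProd h1
    have he : ∀ t : ℝ, (∏ i : Fin m, (fun t : ℝ => μ s(f i, f (cnext i)) +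
        t * ν s(f i, f (cnext i))) t) = cycleWeight (fun e => μ e + t * ν e) f := by
      intro t; rfl
    simp only [he] at h2
    refine HasDerivAt.congr_deriv h2 ?_
    refine Finset.sum_congr rfl fun i _ => ?_
    rw [smul_eq_mul]
    congr 1
    refine Finset.prod_congr rfl fun j _ => by ring
  · simp only [hf, if_false]
    exact hasDerivAt_const 0 0

/-- the total mass of ordered pairs is at most 2 -/
lemma sum_pairs_le (μ : Sym2 X → ℝ) (h : IsProbMass μ) :
    ∑ p : X × X, μ s(p.1, p.2) ≤ 2 := by
  obtain ⟨hpos, -, hsum⟩ := h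
  have hcomp := Finset.sum_comp (s := (Finset.univ : Finset (X × X)))
    (fun e : Sym2 X => μ e) (fun p : X × X => s(p.1, p.2))
  rw [hcomp]
  have hcard : ∀ e : Sym2 X,
      ({p ∈ (Finset.univ : Finset (X × X)) | s(p.1, p.2) = e}).card ≤ 2 := by
    intro e
    induction e using Sym2.ind with
    | _ a b =>
      have hsub : ({p ∈ (Finset.univ : Finset (X × X)) | s(p.1, p.2) = s(a, b)}) ⊆
          {(a, b), (b, a)} := by
        intro p hp
        simp only [Finset.mem_filter, Finset.mem_univ, true_and] at hp
        rw [Sym2.eq_iff] at hp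
        rcases hp with ⟨h1, h2⟩ | ⟨h1, h2⟩
        · simp [Finset.mem_insert, Prod.ext_iff, h1, h2]
        · simp [Finset.mem_insert, Finset.mem_singleton, Prod.ext_iff, h1, h2]
      calc ({p ∈ (Finset.univ : Finset (X × X)) | s(p.1, p.2) = s(a, b)}).card
          ≤ ({(a, b), (b, a)} : Finset (X × X)).card := Finset.card_le_card hsub
        _ ≤ 2 := Finset.card_insert_le _ _ |>.trans (by simp)
  calc ∑ e ∈ Finset.univ.image (fun p : X × X => s(p.1, p.2)),
        ({p ∈ (Finset.univ : Finset (X × X)) | s(p.1, p.2) = e}).card • μ e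
      ≤ ∑ e ∈ Finset.univ.image (fun p : X × X => s(p.1, p.2)), 2 * μ e := by
        refine Finset.sum_le_sum fun e _ => ?_
        rw [nsmul_eq_mul]
        exact mul_le_mul_of_nonneg_right (by exact_mod_cast hcard e) (hpos e)
    _ ≤ ∑ e : Sym2 X, 2 * μ e := by
        refine Finset.sum_le_sum_of_subset_of_nonneg (Finset.subset_univ _) ?_
        intro e _ _
        exact mul_nonneg (by norm_num) (hpos e)
    _ = 2 := by rw [← Finset.mul_sum, hsum, mul_one]

/-- uniform upper bound on the numerator -/
lemma Fnum_le (μ : Sym2 X → ℝ) (h : IsProbMass μ) (m : ℕ) : Fnum μ m ≤ 2 ^ m := by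
  have hpos := h.1
  have step1 : Fnum μ m ≤ ∑ f : Fin m → X, ∏ i : Fin m, μ s(f i, f (cnext i)) := by
    refine Finset.sum_le_sum fun f _ => ?_
    by_cases hf : Function.Injective f
    · simp [hf, cycleWeight]
    · simp only [hf, if_false]
      exact Finset.prod_nonneg fun i _ => hpos _
  have inj : Function.Injective (fun (f : Fin m → X) (i : Fin m) => (f i, f (cnext i))) := by
    intro f g hfg
    funext i
    have := congrFun hfg i
    exact (Prod.ext_iff.1 this).1
  have step2 : ∑ f : Fin m → X, ∏ i : Fin m, μ s(f i, f (cnext i)) ≤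
      ∑ g : Fin m → X × X, ∏ i : Fin m, μ s((g i).1, (g i).2) := by
    have him : ∑ f : Fin m → X, ∏ i : Fin m, μ s(f i, f (cnext i)) =
        ∑ g ∈ Finset.univ.image (fun (f : Fin m → X) (i : Fin m) => (f i, f (cnext i))),
          ∏ i : Fin m, μ s((g i).1, (g i).2) := by
      rw [Finset.sum_image (fun f _ g _ h => inj h)]
    rw [him]
    refine Finset.sum_le_sum_of_subset_of_nonneg (Finset.subset_univ _) fun g _ _ =>
      Finset.prod_nonneg fun i _ => hpos _
  have step3 : ∑ g : Fin m → X × X, ∏ i : Fin m, μ s((g i).1, (g i).2) =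
      (∑ p : X × X, μ s(p.1, p.2)) ^ m := by
    have hpow : (∑ p : X × X, μ s(p.1, p.2)) ^ m =
        ∏ _i : Fin m, ∑ p : X × X, μ s(p.1, p.2) := by
      rw [Finset.prod_const, Finset.card_univ, Fintype.card_fin]
    rw [hpow, Finset.prod_univ_sum, Fintype.piFinset_univ]
  have step4 : (∑ p : X × X, μ s(p.1, p.2)) ^ m ≤ 2 ^ m := by
    refine pow_le_pow_left₀ ?_ (sum_pairs_le μ h) m
    exact Finset.sum_nonneg fun p _ => hpos _
  calc Fnum μ m ≤ _ := step1
    _ ≤ _ := step2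
    _ = _ := step3
    _ ≤ _ := step4

/-- transport a probability mass to `Fin n` preserving `beta` -/
lemma exists_transport (μ : Sym2 X → ℝ) (h : IsProbMass μ) (m : ℕ) :
    ∃ (n : ℕ) (μ' : Sym2 (Fin n) → ℝ), IsProbMass μ' ∧ beta μ' m = beta μ m := by
  obtain ⟨hpos, hdiag, hsum⟩ := h
  set n := Fintype.card X with hn
  set ε : X ≃ Fin n := Fintype.equivFin X with hε
  set E : Sym2 X ≃ Sym2 (Fin n) :=
    ⟨Sym2.map ε, Sym2.map ε.symm,
     fun e => by rw [Sym2.map_map]; simp [Sym2.map_id'],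
     fun e => by rw [Sym2.map_map]; simp [Sym2.map_id']⟩ with hE
  refine ⟨n, fun e => μ (E.symm e), ⟨fun e => hpos _, ?_, ?_⟩, ?_⟩
  · intro e hd
    refine hdiag _ ?_
    induction e using Sym2.ind with
    | _ a b =>
      rw [Sym2.isDiag_iff_proj_eq] at hd
      have : E.symm s(a, b) = s(ε.symm a, ε.symm b) := Sym2.map_pair_eq _ _ _
      rw [this, Sym2.isDiag_iff_proj_eq]
      exact congrArg ε.symm hd
  · rw [Equiv.sum_comp E.symm μ, hsum]
  · unfold beta cycleWeight
    congr 1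
    rw [← Equiv.sum_comp (Equiv.arrowCongr (Equiv.refl (Fin m)) ε)
      (fun f : Fin m → Fin n => if Function.Injective f
        then ∏ i : Fin m, μ (E.symm s(f i, f (cnext i))) else 0)]
    refine Finset.sum_congr rfl fun f _ => ?_
    have h1 : Function.Injective ((Equiv.arrowCongr (Equiv.refl (Fin m)) ε) f) ↔
        Function.Injective f := by
      constructor
      · intro hi a b hab
        exact hi (by simp [Equiv.arrowCongr, hab])
      · intro hi a b hab
        simp only [Equiv.arrowCongr_apply, Function.comp, Equiv.refl_symm,
          Equiv.refl_apply] at hab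
        exact hi (ε.injective hab)
    rw [if_congr h1 rfl rfl]
    by_cases hf : Function.Injective f
    · rw [if_pos hf, if_pos hf]
      refine Finset.prod_congr rfl fun i _ => ?_
      have : E.symm s(ε (f i), ε (f (cnext i))) = s(ε.symm (ε (f i)), ε.symm (ε (f (cnext i)))) :=
        Sym2.map_pair_eq _ _ _
      simp only [Equiv.arrowCongr_apply, Function.comp, Equiv.refl_symm, Equiv.refl_apply]
      rw [this]
      simp
    · rw [if_neg hf, if_neg hf]

/-- the feasible set of `betaSup` is bounded above -/
lemma bddAbove_betaSet (m : ℕ) :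
    BddAbove {b : ℝ | ∃ (n : ℕ) (μ : Sym2 (Fin n) → ℝ), IsProbMass μ ∧ b = beta μ m} := by
  refine ⟨2 ^ m, fun b hb => ?_⟩
  obtain ⟨n, μ', hμ', rfl⟩ := hb
  rw [beta_eq_Fnum]
  rcases Nat.eq_zero_or_pos m with hm | hm
  · subst hm
    simp
  · have h2m : (0:ℝ) < 2 * m := by positivity
    rw [div_le_iff₀ h2m]
    calc Fnum μ' m ≤ 2 ^ m := Fnum_le μ' hμ' m
      _ ≤ 2 ^ m * (2 * m) := by nlinarith [pow_pos (by norm_num : (0:ℝ) < 2) m,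
          (by exact_mod_cast hm : (1:ℝ) ≤ m)]

/-- KKT: the partial derivatives are equal on the support, at an optimum -/
lemma dpart_eq_on_support {m : ℕ} (hm : 3 ≤ m) (μ : Sym2 X → ℝ) (hμ : IsProbMass μ)
    (hopt : beta μ m = betaSup m) {e₁ e₂ : Sym2 X} (h1 : 0 < μ e₁) (h2 : 0 < μ e₂) :
    Dpart μ m e₁ = Dpart μ m e₂ := by
  rcases eq_or_ne e₁ e₂ with rfl | hne
  · rfl
  obtain ⟨hpos, hdiag, hsum⟩ := hμ
  set ν : Sym2 X → ℝ := fun e => (if e = e₂ then (1:ℝ) else 0) - (if e = e₁ then 1 else 0)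
    with hν
  set δ : ℝ := min (μ e₁) (μ e₂) with hδ
  have hδpos : 0 < δ := lt_min h1 h2
  -- the perturbed mass is a probability mass for |t| < δ
  have hprob : ∀ t : ℝ, |t| < δ → IsProbMass (fun e => μ e + t * ν e) := by
    intro t ht
    refine ⟨?_, ?_, ?_⟩
    · intro e
      show 0 ≤ μ e + t * ν e
      rcases eq_or_ne e e₂ with rfl | he2
      · have hv : ν e = 1 := by simp [hν, hne.symm]
        have h' : δ ≤ μ e := by rw [hδ]; exact min_le_right _ _
        rw [hv, mul_one]
        linarith [neg_abs_le t]
      · rcases eq_or_ne e e₁ with rfl | he1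
        · have hv : ν e = -1 := by simp [hν, he2]
          have h' : δ ≤ μ e := by rw [hδ]; exact min_le_left _ _
          rw [hv]
          linarith [le_abs_self t]
        · have : ν e = 0 := by simp [hν, he1, he2]
          rw [this, mul_zero, add_zero]; exact hpos e
    · intro e hd
      show μ e + t * ν e = 0
      have he1 : e ≠ e₁ := fun h => by rw [h] at hd; exact absurd (hdiag _ hd) (ne_of_gt h1)
      have he2 : e ≠ e₂ := fun h => by rw [h] at hd; exact absurd (hdiag _ hd) (ne_of_gt h2)
      have : ν e = 0 := by simp [hν, he1, he2]
      rw [this, mul_zero, add_zero]; exact hdiag e hd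
    · have hν2 : ∑ e : Sym2 X, ν e = 0 := by
        simp only [hν, Finset.sum_sub_distrib]
        rw [Finset.sum_ite_eq' Finset.univ e₂ (fun _ => (1:ℝ)),
          Finset.sum_ite_eq' Finset.univ e₁ (fun _ => (1:ℝ))]
        simp
      show ∑ e : Sym2 X, (μ e + t * ν e) = 1
      simp only [Finset.sum_add_distrib, hsum, ← Finset.mul_sum, hν2, mul_zero, add_zero]
  -- g has a local max at 0
  set g : ℝ → ℝ := fun t => Fnum (fun e => μ e + t * ν e) m with hg
  have hg0 : g 0 = Fnum μ m := by
    simp only [hg]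
    congr 1
    funext e
    simp
  have hmax : IsLocalMax g 0 := by
    have hball : Metric.ball (0:ℝ) δ ∈ nhds (0:ℝ) := Metric.ball_mem_nhds _ hδpos
    refine Filter.eventually_of_mem hball fun t ht => ?_
    have habs : |t| < δ := by
      rw [Metric.mem_ball, Real.dist_eq, sub_zero] at ht; exact ht
    have hpm := hprob t habs
    obtain ⟨n, μ', hμ', hβ⟩ := exists_transport (fun e => μ e + t * ν e) hpm m
    have hmem : beta (fun e => μ e + t * ν e) m ∈
        {b : ℝ | ∃ (n : ℕ) (μ : Sym2 (Fin n) → ℝ), IsProbMass μ ∧ b = beta μ m} :=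
      ⟨n, μ', hμ', hβ.symm⟩
    have hle : beta (fun e => μ e + t * ν e) m ≤ betaSup m :=
      le_csSup (bddAbove_betaSet m) hmem
    rw [← hopt] at hle
    have h2m : (0:ℝ) < 2 * m := by positivity
    have hF : Fnum (fun e => μ e + t * ν e) m ≤ Fnum μ m := by
      rw [beta_eq_Fnum, beta_eq_Fnum] at hle
      exact (div_le_div_iff_of_pos_right h2m).1 hle
    show g t ≤ g 0
    rw [hg0]
    exact hF
  -- derivative at 0 vanishes
  have hD := hasDerivAt_Fnum μ ν m
  have hder0 : deriv g 0 = 0 := hmax.deriv_eq_zero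
  have hval := hD.deriv
  rw [hder0] at hval
  -- rewrite the derivative as Dpart e₂ - Dpart e₁
  have hsplit : (∑ f : Fin m → X, if Function.Injective f then
        ∑ i : Fin m, (∏ j ∈ Finset.univ.erase i, μ s(f j, f (cnext j))) *
          ν s(f i, f (cnext i))
      else 0) = Dpart μ m e₂ - Dpart μ m e₁ := by
    unfold Dpart
    rw [← Finset.sum_sub_distrib]
    refine Finset.sum_congr rfl fun f _ => ?_
    by_cases hf : Function.Injective f
    · simp only [hf, if_true]
      rw [← Finset.sum_sub_distrib]
      refine Finset.sum_congr rfl fun i _ => ?_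
      simp only [hν, mul_sub, mul_ite, mul_one, mul_zero]
    · simp [hf]
  rw [hsplit] at hval
  linarith [hval.symm]

end Aux

/-- Edge regularity identity: for `m ≥ 3` and `μ ∈ Opt(m)`, every edge `e ∈ supp μ`
satisfies `m·β(μ; m)·μ(e) = Σ_{C ∈ C_m(G_μ), e ∈ E(C)} μ(C)` (the sum over unlabeled
`m`-cycles of the support graph through `e`, computed via labeled cycles over `2m`). -/
theorem edge_regularity (m : ℕ) (hm : 3 ≤ m) {X : Type*} [Fintype X] [DecidableEq X]
    (μ : Sym2 X → ℝ) (hμ : IsProbMass μ) (hopt : beta μ m = betaSup m)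
    (e : Sym2 X) (he : 0 < μ e) :
    (m : ℝ) * beta μ m * μ e =
      (∑ f : Fin m → X, if Function.Injective f ∧ (∀ i, 0 < μ s(f i, f (cnext i))) ∧
          (∃ i, s(f i, f (cnext i)) = e) then cycleWeight μ f else 0) / (2 * m) := by
  -- the numerator equals μ e * Dpart μ m e
  rw [← mu_mul_Dpart hm μ hμ.1 e]
  -- Dpart is constant (= lam) on the support
  have hconst : ∀ e' : Sym2 X, 0 < μ e' → Dpart μ m e' = Dpart μ m e := fun e' h' =>
    dpart_eq_on_support hm μ hμ hopt h' he
  -- Euler identity gives Dpart μ m e = m * Fnum μ m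
  have heuler := euler μ m
  have hsum' : ∑ e' : Sym2 X, μ e' * Dpart μ m e' = Dpart μ m e := by
    have : ∀ e' : Sym2 X, μ e' * Dpart μ m e' = μ e' * Dpart μ m e := by
      intro e'
      rcases lt_or_eq_of_le (hμ.1 e') with h' | h'
      · rw [hconst e' h']
      · rw [← h', zero_mul, zero_mul]
    rw [Finset.sum_congr rfl fun e' _ => this e', ← Finset.sum_mul, hμ.2.2, one_mul]
  have hD : Dpart μ m e = m * Fnum μ m := by rw [← hsum', heuler]
  rw [hD, beta_eq_Fnum]
  have h2m : (2 * (m:ℝ)) ≠ 0 := by positivity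
  field_simp
end

section
/- (Vertex regularity identity.) Fix m ≥ 3 and let μ ∈ Opt(m). Then for every vertex x ∈ supp μ̄, m · β(μ; m) · μ̄(x) = Σ_{C : x ∈ V(C)} 2·μ(C), where the sum is over all unlabeled m-cycles C in the support graph G_μ containing the vertex x. -/
open Finset

section CnextLemmas

variable {m : ℕ}

lemma cnext_val (i : Fin m) : (cnext i).val = (i.val + 1) % m := rfl

lemma cnext_injective : Function.Injective (cnext (m := m)) := by
  intro i j h
  have hi := i.isLt; have hj := j.isLt
  have h' : (i.val + 1) % m = (j.val + 1) % m := congrArg Fin.val h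
  apply Fin.ext
  rcases Nat.lt_or_ge (i.val + 1) m with c1 | c1 <;>
    rcases Nat.lt_or_ge (j.val + 1) m with c2 | c2
  · rw [Nat.mod_eq_of_lt c1, Nat.mod_eq_of_lt c2] at h'; omega
  · have hj2 : j.val + 1 = m := by omega
    rw [Nat.mod_eq_of_lt c1, hj2, Nat.mod_self] at h'; omega
  · have hi2 : i.val + 1 = m := by omega
    rw [Nat.mod_eq_of_lt c2, hi2, Nat.mod_self] at h'; omega
  · omega

lemma cnext_ne (hm : 2 ≤ m) (i : Fin m) : cnext i ≠ i := by
  intro h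
  have h' : (i.val + 1) % m = i.val := congrArg Fin.val h
  have hi := i.isLt
  rcases Nat.lt_or_ge (i.val + 1) m with hc | hc
  · rw [Nat.mod_eq_of_lt hc] at h'; omega
  · have hm2 : i.val + 1 = m := by omega
    rw [hm2, Nat.mod_self] at h'; omega

lemma cnext_mk {k : ℕ} (hk : k + 1 < m) (h : k < m) :
    cnext ⟨k, h⟩ = ⟨k + 1, hk⟩ := by
  apply Fin.ext
  simp [cnext_val, Nat.mod_eq_of_lt hk]

lemma cnext_surjective : Function.Surjective (cnext (m := m)) :=
  Finite.surjective_of_injective cnext_injective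

/-- If two injective cycles have the same edge sequence, they are equal. -/
lemma edge_seq_inj (hm : 3 ≤ m) {X : Type*} (f g : Fin m → X)
    (hf : Function.Injective f) (hg : Function.Injective g)
    (h : ∀ i, s(f i, f (cnext i)) = s(g i, g (cnext i))) : f = g := by
  have h0m : (0 : ℕ) < m := by omega
  have h1m : (1 : ℕ) < m := by omega
  have h2m : (2 : ℕ) < m := by omega
  set z : Fin m := ⟨0, h0m⟩ with hz
  set o : Fin m := ⟨1, h1m⟩ with ho
  set t : Fin m := ⟨2, h2m⟩ with ht
  have hcz : cnext z = o := by apply Fin.ext; simp [cnext_val, hz, ho, Nat.mod_eq_of_lt h1m]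
  have hco : cnext o = t := by apply Fin.ext; simp [cnext_val, ho, ht, Nat.mod_eq_of_lt h2m]
  have hzo : z ≠ o := by simp [hz, ho, Fin.ext_iff]
  have hzt : z ≠ t := by simp [hz, ht, Fin.ext_iff]
  have hot : o ≠ t := by simp [ho, ht, Fin.ext_iff]
  -- base case: f z = g z
  have hbase : f z = g z := by
    have h0 := h z
    rw [hcz] at h0
    rcases Sym2.eq_iff.mp h0 with ⟨h1, -⟩ | ⟨h1, h2⟩
    · exact h1
    · -- f z = g o and f o = g z
      have h1' := h o
      rw [hco] at h1'
      rw [← h1] at h1'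
      rcases Sym2.eq_iff.mp h1' with ⟨ha, -⟩ | ⟨-, hb⟩
      · exact absurd (hf ha) hzo.symm
      · exact absurd (hf hb) (Ne.symm hzt)
  -- step
  have hstep : ∀ i : Fin m, f i = g i → f (cnext i) = g (cnext i) := by
    intro i hi
    have hi' := h i
    rw [hi] at hi'
    exact Sym2.congr_right.mp hi'
  -- induction
  have hall : ∀ k : ℕ, ∀ hk : k < m, f ⟨k, hk⟩ = g ⟨k, hk⟩ := by
    intro k
    induction k with
    | zero => intro hk; exact hbase
    | succ k ih =>
      intro hk
      have hk' : k < m := by omega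
      have := hstep ⟨k, hk'⟩ (ih hk')
      rwa [cnext_mk hk] at this
  funext i
  have := hall i.val i.isLt
  simpa using this

end CnextLemmas
section Sums

variable {X : Type*} [Fintype X] [DecidableEq X]

/-- unnormalized cycle sum -/
noncomputable def cS (μ : Sym2 X → ℝ) (m : ℕ) : ℝ :=
  ∑ f : Fin m → X, if Function.Injective f then cycleWeight μ f else 0

/-- unnormalized partial derivative of `cS` in the edge variable `e` -/
noncomputable def cP (μ : Sym2 X → ℝ) (m : ℕ) (e : Sym2 X) : ℝ :=
  ∑ f : Fin m → X, if Function.Injective f then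
    ∑ i : Fin m, if s(f i, f (cnext i)) = e then
      ∏ j ∈ Finset.univ.erase i, μ s(f j, f (cnext j)) else 0
  else 0

lemma beta_eq_cS (μ : Sym2 X → ℝ) (m : ℕ) : beta μ m = cS μ m / (2 * m) := rfl

omit [Fintype X] [DecidableEq X] in
lemma cycleWeight_nonneg {μ : Sym2 X → ℝ} (h0 : ∀ e, 0 ≤ μ e) {m : ℕ} (f : Fin m → X) :
    0 ≤ cycleWeight μ f :=
  Finset.prod_nonneg fun _ _ => h0 _

/-- Euler identity -/
lemma euler_identity (μ : Sym2 X → ℝ) (m : ℕ) :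
    ∑ e : Sym2 X, μ e * cP μ m e = m * cS μ m := by
  unfold cP cS
  simp only [Finset.mul_sum, mul_ite, mul_zero]
  rw [Finset.sum_comm]
  refine Finset.sum_congr rfl fun f _ => ?_
  by_cases hf : Function.Injective f
  · simp only [hf, if_true]
    rw [Finset.sum_comm]
    have key : ∀ i : Fin m, (∑ e : Sym2 X, if s(f i, f (cnext i)) = e then
        μ e * ∏ j ∈ Finset.univ.erase i, μ s(f j, f (cnext j)) else 0)
        = cycleWeight μ f := by
      intro i
      rw [Finset.sum_ite_eq]
      simp only [Finset.mem_univ, if_pos]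
      rw [cycleWeight]
      exact Finset.mul_prod_erase Finset.univ (fun j => μ s(f j, f (cnext j))) (Finset.mem_univ i)
    rw [Finset.sum_congr rfl fun i _ => key i]
    rw [Finset.sum_const, Finset.card_univ, Fintype.card_fin, nsmul_eq_mul]
  · simp [hf]

/-- the bound `cS ≤ 1` for a probability mass -/
lemma cS_le_one {μ : Sym2 X → ℝ} (hμ : IsProbMass μ) {m : ℕ} (hm : 3 ≤ m) :
    cS μ m ≤ 1 := by
  classical
  have key : cS μ m = ∑ f ∈ Finset.univ.filter (fun f : Fin m → X => Function.Injective f),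
      cycleWeight μ f := by
    unfold cS; rw [Finset.sum_filter]
  rw [key]
  set E : (Fin m → X) → (Fin m → Sym2 X) := fun f i => s(f i, f (cnext i)) with hE
  have hinj : ∀ f ∈ Finset.univ.filter (fun f : Fin m → X => Function.Injective f),
      ∀ g ∈ Finset.univ.filter (fun f : Fin m → X => Function.Injective f),
      E f = E g → f = g := by
    intro f hf g hg hfg
    simp only [Finset.mem_filter] at hf hg
    exact edge_seq_inj hm f g hf.2 hg.2 (fun i => congrFun hfg i)
  have hsum : ∑ f ∈ Finset.univ.filter (fun f : Fin m → X => Function.Injective f),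
      cycleWeight μ f
      = ∑ h ∈ (Finset.univ.filter (fun f : Fin m → X => Function.Injective f)).image E,
        ∏ i, μ (h i) := by rw [Finset.sum_image hinj]; rfl
  rw [hsum]
  have hle : ∑ h ∈ (Finset.univ.filter (fun f : Fin m → X => Function.Injective f)).image E,
      ∏ i, μ (h i) ≤ ∑ h : Fin m → Sym2 X, ∏ i, μ (h i) := by
    apply Finset.sum_le_sum_of_subset_of_nonneg (Finset.subset_univ _)
    intro h _ _
    exact Finset.prod_nonneg fun _ _ => hμ.1 _
  refine hle.trans ?_
  rw [← Fintype.prod_sum (fun _ e => μ e)]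
  rw [Finset.prod_congr rfl fun i _ => hμ.2.2]
  simp

end Sums
section Vertex

variable {X : Type*} [Fintype X] [DecidableEq X]

lemma vertex_sum {m : ℕ} (hm : 3 ≤ m) (μ : Sym2 X → ℝ) (x : X) :
    ∑ y ∈ Finset.univ.filter (· ≠ x), μ s(x, y) * cP μ m s(x, y)
      = ∑ f : Fin m → X, if Function.Injective f ∧ (∃ i, f i = x)
          then 2 * cycleWeight μ f else 0 := by
  classical
  unfold cP
  simp only [Finset.mul_sum, mul_ite, mul_zero]
  rw [Finset.sum_comm]
  refine Finset.sum_congr rfl fun f _ => ?_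
  by_cases hf : Function.Injective f
  · simp only [hf, if_true, true_and]
    rw [Finset.sum_comm]
    have key : ∀ i : Fin m,
        (∑ y ∈ Finset.univ.filter (· ≠ x), if s(f i, f (cnext i)) = s(x, y)
          then μ s(x, y) * ∏ j ∈ Finset.univ.erase i, μ s(f j, f (cnext j)) else 0)
        = if (f i = x ∨ f (cnext i) = x) then cycleWeight μ f else 0 := by
      intro i
      have hne : f (cnext i) ≠ f i := fun h => cnext_ne (by omega) i (hf h)
      by_cases h1 : f i = x
      · rw [if_pos (Or.inl h1)]
        rw [Finset.sum_eq_single (f (cnext i))]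
        · have hcond : s(f i, f (cnext i)) = s(x, f (cnext i)) := by rw [h1]
          rw [if_pos hcond, ← h1]
          exact Finset.mul_prod_erase Finset.univ
            (fun j => μ s(f j, f (cnext j))) (Finset.mem_univ i)
        · intro y _ hy
          apply if_neg
          intro hcond
          rcases Sym2.eq_iff.mp hcond with ⟨-, h⟩ | ⟨-, h⟩
          · exact hy h.symm
          · rw [← h1] at h; exact hne h
        · intro hmem
          exact absurd (by simp [Finset.mem_filter, h1 ▸ hne]) hmem
      · by_cases h2 : f (cnext i) = x
        · rw [if_pos (Or.inr h2)]
          rw [Finset.sum_eq_single (f i)]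
          · have hcond : s(f i, f (cnext i)) = s(x, f i) := by
              rw [h2, Sym2.eq_swap]
            rw [if_pos hcond]
            have : μ s(x, f i) = μ s(f i, f (cnext i)) := by rw [hcond]
            rw [this]
            exact Finset.mul_prod_erase Finset.univ
              (fun j => μ s(f j, f (cnext j))) (Finset.mem_univ i)
          · intro y _ hy
            apply if_neg
            intro hcond
            rcases Sym2.eq_iff.mp hcond with ⟨h, -⟩ | ⟨h, -⟩
            · exact h1 h
            · exact hy h.symm
          · intro hmem
            exact absurd (by simp [Finset.mem_filter, h1]) hmem
        · rw [if_neg (by tauto)]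
          apply Finset.sum_eq_zero
          intro y _
          apply if_neg
          intro hcond
          rcases Sym2.eq_iff.mp hcond with ⟨h, -⟩ | ⟨-, h⟩
          · exact h1 h
          · exact h2 h
    rw [Finset.sum_congr rfl fun i _ => key i]
    by_cases hex : ∃ k, f k = x
    · rw [if_pos hex]
      obtain ⟨k, hk⟩ := hex
      obtain ⟨p, hp⟩ := cnext_surjective k
      have hkp : k ≠ p := by
        intro h
        exact cnext_ne (by omega) p (h ▸ hp)
      have hfilter : Finset.univ.filter (fun i => f i = x ∨ f (cnext i) = x)
          = {k, p} := by
        ext i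
        simp only [Finset.mem_filter, Finset.mem_univ, true_and,
          Finset.mem_insert, Finset.mem_singleton]
        constructor
        · rintro (h | h)
          · exact Or.inl (hf (h.trans hk.symm))
          · refine Or.inr (cnext_injective ?_)
            rw [hp]
            exact hf (h.trans hk.symm)
        · rintro (h | h)
          · exact Or.inl (h ▸ hk)
          · subst h; rw [hp]; exact Or.inr hk
      rw [← Finset.sum_filter, hfilter, Finset.sum_pair hkp]
      ring
    · rw [if_neg hex]
      apply Finset.sum_eq_zero
      intro i _
      apply if_neg
      push_neg at hex
      rintro (h | h)
      · exact hex i h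
      · exact hex (cnext i) h
  · simp [hf]

end Vertex
section Transfer

lemma betaSup_bddAbove {m : ℕ} (hm : 3 ≤ m) :
    BddAbove {b : ℝ | ∃ (n : ℕ) (μ : Sym2 (Fin n) → ℝ), IsProbMass μ ∧ b = beta μ m} := by
  refine ⟨1 / (2 * m), ?_⟩
  rintro b ⟨n, μ, hμ, rfl⟩
  have hm0 : (0 : ℝ) < 2 * m := by
    have : (3 : ℝ) ≤ m := by exact_mod_cast hm
    linarith
  rw [beta_eq_cS]
  apply div_le_div_of_nonneg_right (cS_le_one hμ hm) hm0.le

lemma beta_le_betaSup {X : Type*} [Fintype X] [DecidableEq X] {m : ℕ} (hm : 3 ≤ m)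
    (ν : Sym2 X → ℝ) (hν : IsProbMass ν) : beta ν m ≤ betaSup m := by
  classical
  apply le_csSup (betaSup_bddAbove hm)
  set n := Fintype.card X
  set e : X ≃ Fin n := Fintype.equivFin X with he
  set μ' : Sym2 (Fin n) → ℝ := fun a => ν (Sym2.map e.symm a) with hμ'
  have hbij : Function.Bijective (Sym2.map (e.symm : Fin n → X)) := by
    apply Function.bijective_iff_has_inverse.mpr
    refine ⟨Sym2.map e, fun a => ?_, fun b => ?_⟩
    · rw [Sym2.map_map]; simp
    · rw [Sym2.map_map]; simp
  have hprob : IsProbMass μ' := by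
    refine ⟨fun a => hν.1 _, fun a ha => hν.2.1 _ (ha.map), ?_⟩
    rw [Fintype.sum_bijective _ hbij μ' ν (fun a => rfl)]
    exact hν.2.2
  have hFbij : Function.Bijective (fun f : Fin m → X => fun i => e (f i)) := by
    constructor
    · intro a b h
      funext i
      exact e.injective (congrFun h i)
    · intro g
      exact ⟨fun i => e.symm (g i), funext fun i => by simp⟩
  have hbeta : beta μ' m = beta ν m := by
    unfold beta
    congr 1
    rw [Fintype.sum_bijective _ hFbij
      (fun f : Fin m → X => if Function.Injective f then cycleWeight ν f else 0)
      (fun g : Fin m → Fin n => if Function.Injective g then cycleWeight μ' g else 0)]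
    intro f
    have hinj : Function.Injective (fun i => e (f i)) ↔ Function.Injective f :=
      Function.Injective.of_comp_iff e.injective f
    have hcw : cycleWeight μ' (fun i => e (f i)) = cycleWeight ν f := by
      unfold cycleWeight
      refine Finset.prod_congr rfl fun i _ => ?_
      rw [hμ']
      simp [Sym2.map_pair_eq]
    by_cases hf : Function.Injective f
    · rw [if_pos hf, if_pos (hinj.mpr hf), hcw]
    · rw [if_neg hf, if_neg (fun h => hf (hinj.mp h))]
  exact ⟨n, μ', hprob, hbeta.symm⟩

end Transfer
section Opt

variable {X : Type*} [Fintype X] [DecidableEq X]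

lemma cP_eq_of_pos {m : ℕ} (hm : 3 ≤ m) {μ : Sym2 X → ℝ} (hμ : IsProbMass μ)
    (hopt : beta μ m = betaSup m) {e e' : Sym2 X} (he : 0 < μ e) (he' : 0 < μ e') :
    cP μ m e = cP μ m e' := by
  classical
  by_cases hee : e = e'
  · rw [hee]
  have hm0 : (0 : ℝ) < 2 * m := by
    have : (3 : ℝ) ≤ m := by exact_mod_cast hm
    linarith
  set c : Sym2 X → ℝ := fun a => (if a = e' then 1 else 0) - (if a = e then 1 else 0) with hc
  set ν : ℝ → Sym2 X → ℝ := fun t a => μ a + t * c a with hν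
  set δ := min (μ e) (μ e') with hδ
  have hδpos : 0 < δ := lt_min he he'
  have hδe : δ ≤ μ e := min_le_left _ _
  have hδe' : δ ≤ μ e' := min_le_right _ _
  have hν0 : ν 0 = μ := by funext a; simp [hν]
  have hce : c e = -1 := by simp [hc, hee]
  have hce' : c e' = 1 := by simp [hc, Ne.symm hee]
  have hprob : ∀ t, |t| < δ → IsProbMass (ν t) := by
    intro t ht
    obtain ⟨ht1, ht2⟩ := abs_lt.mp ht
    refine ⟨?_, ?_, ?_⟩
    · intro a
      by_cases h1 : a = e'
      · subst h1; rw [hν]; simp only [hce']; linarith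
      · by_cases h2 : a = e
        · subst h2; rw [hν]; simp only [hce]; linarith
        · have hca : c a = 0 := by simp [hc, h1, h2]
          rw [hν]; simp only [hca]
          have := hμ.1 a
          linarith
    · intro a ha
      have h1 : a ≠ e := by
        intro h; subst h
        rw [hμ.2.1 a ha] at he; exact lt_irrefl 0 he
      have h2 : a ≠ e' := by
        intro h; subst h
        rw [hμ.2.1 a ha] at he'; exact lt_irrefl 0 he'
      have hca : c a = 0 := by simp [hc, h1, h2]
      rw [hν]; simp only [hca]
      rw [hμ.2.1 a ha]; ring
    · have hsc : ∑ a : Sym2 X, c a = 0 := by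
        rw [hc]
        rw [Finset.sum_sub_distrib]
        simp
      calc ∑ a : Sym2 X, ν t a = ∑ a : Sym2 X, (μ a + t * c a) := rfl
        _ = (∑ a : Sym2 X, μ a) + t * ∑ a : Sym2 X, c a := by
            rw [Finset.sum_add_distrib, Finset.mul_sum]
        _ = 1 := by rw [hμ.2.2, hsc]; ring
  set g : ℝ → ℝ := fun t => cS (ν t) m with hg
  have hmax : IsLocalMax g 0 := by
    have hball : ∀ t ∈ Metric.ball (0 : ℝ) δ, g t ≤ g 0 := by
      intro t ht
      rw [Metric.mem_ball, Real.dist_eq, sub_zero] at ht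
      have hpt := hprob t ht
      have h1 : beta (ν t) m ≤ betaSup m := beta_le_betaSup hm _ hpt
      rw [← hopt, beta_eq_cS, beta_eq_cS] at h1
      have h2 := (div_le_div_iff_of_pos_right hm0).mp h1
      rw [hg]
      simpa [hν0] using h2
    exact Filter.eventually_of_mem (Metric.ball_mem_nhds 0 hδpos) hball
  have hderiv : HasDerivAt g (cP μ m e' - cP μ m e) 0 := by
    have hD : HasDerivAt g (∑ f : Fin m → X, if Function.Injective f then
        (∑ i : Fin m, (∏ j ∈ Finset.univ.erase i, μ s(f j, f (cnext j)))
          * c (s(f i, f (cnext i)))) else 0) 0 := by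
      rw [hg]
      show HasDerivAt (fun t => ∑ f : Fin m → X, if Function.Injective f then
        ∏ i : Fin m, ν t (s(f i, f (cnext i))) else 0) _ 0
      apply HasDerivAt.fun_sum
      intro f _
      by_cases hf : Function.Injective f
      · simp only [hf, if_true]
        have hfac : ∀ i : Fin m, HasDerivAt (fun t => ν t (s(f i, f (cnext i))))
            (c (s(f i, f (cnext i)))) 0 := by
          intro i
          have : HasDerivAt (fun t : ℝ => μ (s(f i, f (cnext i)))
              + t * c (s(f i, f (cnext i)))) (1 * c (s(f i, f (cnext i)))) 0 :=
            ((hasDerivAt_id (0 : ℝ)).mul_const _).const_add _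
          exact this.congr_deriv (one_mul _)
        have := HasDerivAt.fun_finsetProd (u := Finset.univ)
          (f := fun i t => ν t (s(f i, f (cnext i))))
          (f' := fun i => c (s(f i, f (cnext i)))) (fun i _ => hfac i)
        simpa [hν0, smul_eq_mul] using this
      · simp only [hf, if_false]
        exact hasDerivAt_const 0 0
    have heq : (∑ f : Fin m → X, if Function.Injective f then
        (∑ i : Fin m, (∏ j ∈ Finset.univ.erase i, μ s(f j, f (cnext j)))
          * c (s(f i, f (cnext i)))) else 0) = cP μ m e' - cP μ m e := by
      unfold cP
      rw [← Finset.sum_sub_distrib]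
      refine Finset.sum_congr rfl fun f _ => ?_
      by_cases hf : Function.Injective f
      · simp only [hf, if_true]
        rw [← Finset.sum_sub_distrib]
        refine Finset.sum_congr rfl fun i _ => ?_
        rw [hc]
        simp only [mul_sub, mul_ite, mul_one, mul_zero]
      · simp [hf]
    rw [← heq]
    exact hD
  have h0 : deriv g 0 = cP μ m e' - cP μ m e := hderiv.deriv
  have h1 : deriv g 0 = 0 := hmax.deriv_eq_zero
  rw [h1] at h0
  linarith

end Opt
/-- Vertex regularity identity: for `m ≥ 3` and `μ ∈ Opt(m)`, every vertex `x ∈ supp μ̄`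
satisfies `m·β(μ; m)·μ̄(x) = Σ_{C ∈ C_m(G_μ), x ∈ V(C)} 2·μ(C)` (the sum over unlabeled
`m`-cycles of the support graph through `x`, computed via labeled cycles over `2m`). -/
theorem vertex_regularity (m : ℕ) (hm : 3 ≤ m) {X : Type*} [Fintype X] [DecidableEq X]
    (μ : Sym2 X → ℝ) (hμ : IsProbMass μ) (hopt : beta μ m = betaSup m)
    (x : X) (hx : 0 < wdeg μ x) :
    (m : ℝ) * beta μ m * wdeg μ x =
      (∑ f : Fin m → X, if Function.Injective f ∧ (∀ i, 0 < μ s(f i, f (cnext i))) ∧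
          (∃ i, f i = x) then 2 * cycleWeight μ f else 0) / (2 * m) := by
  classical
  have hm0 : (0 : ℝ) < 2 * m := by
    have : (3 : ℝ) ≤ m := by exact_mod_cast hm
    linarith
  -- there is a support edge
  have hex : ∃ e0 : Sym2 X, 0 < μ e0 := by
    by_contra h
    push_neg at h
    have : ∀ e : Sym2 X, μ e = 0 := fun e => le_antisymm (h e) (hμ.1 e)
    have hsum : (∑ e : Sym2 X, μ e) = 0 := Finset.sum_eq_zero fun e _ => this e
    rw [hμ.2.2] at hsum
    norm_num at hsum
  obtain ⟨e0, he0⟩ := hex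
  -- the partial derivative is `m · cS` on every support edge
  have hP : ∀ e : Sym2 X, 0 < μ e → cP μ m e = m * cS μ m := by
    have heuler := euler_identity μ m
    have hconst : ∑ e : Sym2 X, μ e * cP μ m e = ∑ e : Sym2 X, μ e * cP μ m e0 := by
      refine Finset.sum_congr rfl fun a _ => ?_
      by_cases h : 0 < μ a
      · rw [cP_eq_of_pos hm hμ hopt h he0]
      · have ha : μ a = 0 := le_antisymm (not_lt.mp h) (hμ.1 a)
        rw [ha]; ring
    have h1 : ∑ e : Sym2 X, μ e * cP μ m e0 = cP μ m e0 := by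
      rw [← Finset.sum_mul, hμ.2.2, one_mul]
    have h2 : cP μ m e0 = m * cS μ m := by
      rw [← h1, ← hconst, heuler]
    intro e he
    rw [cP_eq_of_pos hm hμ hopt he he0, h2]
  -- drop the positivity condition from the sum
  have hdrop : (∑ f : Fin m → X, if Function.Injective f ∧
        (∀ i, 0 < μ s(f i, f (cnext i))) ∧ (∃ i, f i = x)
        then 2 * cycleWeight μ f else 0)
      = ∑ f : Fin m → X, if Function.Injective f ∧ (∃ i, f i = x)
        then 2 * cycleWeight μ f else 0 := by
    refine Finset.sum_congr rfl fun f _ => ?_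
    by_cases hf : Function.Injective f
    · by_cases hmem : ∃ i, f i = x
      · by_cases hpos : ∀ i, 0 < μ s(f i, f (cnext i))
        · simp [hf, hmem, hpos]
        · push_neg at hpos
          obtain ⟨i, hi⟩ := hpos
          have hzero : μ s(f i, f (cnext i)) = 0 := le_antisymm hi (hμ.1 _)
          have hcw : cycleWeight μ f = 0 :=
            Finset.prod_eq_zero (Finset.mem_univ i) hzero
          have : ¬ (∀ i, 0 < μ s(f i, f (cnext i))) := by
            intro h; exact absurd (h i) (not_lt.mpr hi)
          simp [hf, hmem, this, hcw]
      · simp [hmem]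
    · simp [hf]
  rw [hdrop, ← vertex_sum hm μ x]
  have hfinal : ∑ y ∈ Finset.univ.filter (· ≠ x), μ s(x, y) * cP μ m s(x, y)
      = (m * cS μ m) * wdeg μ x := by
    rw [wdeg, Finset.mul_sum]
    refine Finset.sum_congr rfl fun y _ => ?_
    by_cases h : 0 < μ s(x, y)
    · rw [hP _ h]; ring
    · have : μ s(x, y) = 0 := le_antisymm (not_lt.mp h) (hμ.1 _)
      rw [this]; ring
  rw [hfinal, beta_eq_cS]
  field_simp
end

section
/- Fix m ∈ {5, 6} and define f : [0, 1) → ℝ by f(z) = (2/(2 − z))^4 · ((m − 4)/(m − 4 + z))^{m−4} · (1 − z). Then f is nondecreasing on [0, 2/(m − 1)] and nonincreasing on [2/(m − 1), 1); moreover there is a unique z* ∈ (0, 1) with f(z*) = 1, and f(z) > 1 for all z ∈ (0, z*) while f(z) < 1 for all z ∈ (z*, 1). -/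
open Finset

lemma shape_aux (f : ℝ → ℝ) (c : ℝ) (hc0 : 0 < c) (hc9 : c < 9/10)
    (D : ℝ → ℝ)
    (hderiv : ∀ z ∈ Set.Ioo (-1:ℝ) 1, HasDerivAt f (D z) z)
    (hpos : ∀ z ∈ Set.Ioo 0 c, 0 < D z)
    (hneg : ∀ z ∈ Set.Ioo c 1, D z < 0)
    (hf0 : f 0 = 1) (hf9 : f (9/10 : ℝ) < 1) :
    MonotoneOn f (Set.Icc 0 c) ∧ AntitoneOn f (Set.Ico c 1) ∧
    ∃ zs ∈ Set.Ioo (0:ℝ) 1, f zs = 1 ∧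
      (∀ z ∈ Set.Ioo (0:ℝ) 1, f z = 1 → z = zs) ∧
      (∀ z ∈ Set.Ioo (0:ℝ) zs, 1 < f z) ∧
      (∀ z ∈ Set.Ioo zs (1:ℝ), f z < 1) := by
  have hcont : ∀ s : Set ℝ, s ⊆ Set.Ioo (-1:ℝ) 1 → ContinuousOn f s := by
    intro s hs z hz
    exact ((hderiv z (hs hz)).differentiableAt.continuousAt).continuousWithinAt
  have hsub1 : Set.Icc (0:ℝ) c ⊆ Set.Ioo (-1:ℝ) 1 := by
    intro z hz; exact ⟨by linarith [hz.1], by linarith [hz.2]⟩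
  have hsub2 : Set.Ico c (1:ℝ) ⊆ Set.Ioo (-1:ℝ) 1 := by
    intro z hz; exact ⟨by linarith [hz.1], hz.2⟩
  have SM : StrictMonoOn f (Set.Icc 0 c) := by
    apply strictMonoOn_of_deriv_pos (convex_Icc _ _) (hcont _ hsub1)
    intro z hz
    rw [interior_Icc] at hz
    rw [(hderiv z ⟨by linarith [hz.1], by linarith [hz.2]⟩).deriv]
    exact hpos z hz
  have SA : StrictAntiOn f (Set.Ico c 1) := by
    apply strictAntiOn_of_deriv_neg (convex_Ico _ _) (hcont _ hsub2)
    intro z hz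
    rw [interior_Ico] at hz
    rw [(hderiv z ⟨by linarith [hz.1], hz.2⟩).deriv]
    exact hneg z hz
  have hfc : 1 < f c := by
    have := SM ⟨le_rfl, hc0.le⟩ ⟨hc0.le, le_rfl⟩ hc0
    rwa [hf0] at this
  have hsub3 : Set.Icc c (9/10 : ℝ) ⊆ Set.Ioo (-1:ℝ) 1 := by
    intro z hz; exact ⟨by linarith [hz.1], by linarith [hz.2]⟩
  have hIVT : (1:ℝ) ∈ f '' Set.Icc c (9/10) :=
    intermediate_value_Icc' hc9.le (hcont _ hsub3) ⟨hf9.le, hfc.le⟩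
  obtain ⟨zs, hzs, hfzs⟩ := hIVT
  have hzc : c < zs := by
    rcases lt_or_eq_of_le hzs.1 with h | h
    · exact h
    · exfalso; rw [← h] at hfzs; rw [hfzs] at hfc; linarith
  have hzs1 : zs < 1 := lt_of_le_of_lt hzs.2 (by norm_num)
  have hgt : ∀ z ∈ Set.Ioo (0:ℝ) zs, 1 < f z := by
    rintro z ⟨hz0, hzz⟩
    rcases le_or_gt z c with h | h
    · have := SM ⟨le_rfl, hc0.le⟩ ⟨hz0.le, h⟩ hz0
      rwa [hf0] at this
    · have := SA ⟨h.le, by linarith⟩ ⟨hzc.le, hzs1⟩ hzz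
      rwa [hfzs] at this
  have hlt : ∀ z ∈ Set.Ioo zs (1:ℝ), f z < 1 := by
    rintro z ⟨hz1, hz2⟩
    have := SA ⟨hzc.le, hzs1⟩ ⟨by linarith, hz2⟩ hz1
    rwa [hfzs] at this
  refine ⟨SM.monotoneOn, SA.antitoneOn, zs, ⟨hc0.trans hzc, hzs1⟩, hfzs, ?_, hgt, hlt⟩
  rintro z ⟨hz0, hz1⟩ hfz
  rcases lt_trichotomy z zs with h | h | h
  · exact absurd hfz (by have := hgt z ⟨hz0, h⟩; linarith)
  · exact h
  · exact absurd hfz (by have := hlt z ⟨h, hz1⟩; linarith)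

/-- For `m ∈ {5, 6}`, the function `f(z) = (2/(2-z))^4 · ((m-4)/(m-4+z))^{m-4} · (1-z)` is
nondecreasing on `[0, 2/(m-1)]` and nonincreasing on `[2/(m-1), 1)`; moreover there is a
unique `z* ∈ (0, 1)` with `f(z*) = 1`, and `f > 1` on `(0, z*)` while `f < 1` on `(z*, 1)`. -/
theorem f_shape (m : ℕ) (hm : m ∈ ({5, 6} : Set ℕ)) (f : ℝ → ℝ)
    (hf : ∀ z : ℝ,
      f z = (2 / (2 - z)) ^ 4 * (((m : ℝ) - 4) / ((m : ℝ) - 4 + z)) ^ (m - 4) * (1 - z)) :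
    MonotoneOn f (Set.Icc (0 : ℝ) (2 / ((m : ℝ) - 1))) ∧
    AntitoneOn f (Set.Ico (2 / ((m : ℝ) - 1)) 1) ∧
    ∃ zs ∈ Set.Ioo (0 : ℝ) 1, f zs = 1 ∧
      (∀ z ∈ Set.Ioo (0 : ℝ) 1, f z = 1 → z = zs) ∧
      (∀ z ∈ Set.Ioo (0 : ℝ) zs, 1 < f z) ∧
      (∀ z ∈ Set.Ioo zs (1 : ℝ), f z < 1) := by
  rw [Set.mem_insert_iff, Set.mem_singleton_iff] at hm
  rcases hm with rfl | rfl
  · -- m = 5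
    have hc : (2:ℝ) / (((5:ℕ):ℝ) - 1) = 1/2 := by norm_num
    rw [hc]
    have hf' : ∀ z : ℝ, f z = (2 / (2 - z)) ^ 4 * (1 / (1 + z)) * (1 - z) := by
      intro z; rw [hf z]; norm_num
    have heq : ∀ x ∈ Set.Ioo (-1:ℝ) 1, f x = 16 * (1 - x) / ((2 - x) ^ 4 * (1 + x)) := by
      rintro x ⟨hx1, hx2⟩
      have h2 : (2:ℝ) - x ≠ 0 := by linarith
      have h1 : (1:ℝ) + x ≠ 0 := by linarith
      rw [hf' x]; field_simp
      norm_num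
    refine shape_aux f (1/2) (by norm_num) (by norm_num)
      (fun z => 32 * z * (1 - 2*z) * (2 - z) ^ 3 / ((2 - z) ^ 4 * (1 + z)) ^ 2) ?_ ?_ ?_ ?_ ?_
    · rintro z ⟨hz1, hz2⟩
      have h2 : (0:ℝ) < 2 - z := by linarith
      have h1 : (0:ℝ) < 1 + z := by linarith
      have hu : HasDerivAt (fun x : ℝ => 16 * (1 - x)) (-16) z := by
        simpa using ((hasDerivAt_id z).const_sub 1).const_mul 16
      have hA : HasDerivAt (fun x : ℝ => (2 - x) ^ 4) (4 * (2 - z) ^ 3 * (-1)) z := by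
        simpa using ((hasDerivAt_id z).const_sub 2).fun_pow 4
      have hB : HasDerivAt (fun x : ℝ => 1 + x) 1 z := by
        simpa using (hasDerivAt_id z).const_add 1
      have hv := hA.mul hB
      have hvne : (2 - z) ^ 4 * (1 + z) ≠ 0 := by positivity
      have hg := hu.div hv hvne
      have hg' : HasDerivAt (fun x : ℝ => 16 * (1 - x) / ((2 - x) ^ 4 * (1 + x)))
          (32 * z * (1 - 2*z) * (2 - z) ^ 3 / ((2 - z) ^ 4 * (1 + z)) ^ 2) z := by
        refine hg.congr_deriv ?_
        simp only [Pi.mul_apply]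
        rw [div_eq_div_iff (by positivity) (by positivity)]
        ring
      exact hg'.congr_of_eventuallyEq
        (Filter.eventuallyEq_of_mem (Ioo_mem_nhds hz1 hz2) heq)
    · rintro z ⟨hz1, hz2⟩
      apply div_pos
      · apply mul_pos (mul_pos (mul_pos (by norm_num) hz1) (by linarith))
          (pow_pos (by linarith) 3)
      · have h2 : (0:ℝ) < 2 - z := by linarith
        have h1 : (0:ℝ) < 1 + z := by linarith
        positivity
    · rintro z ⟨hz1, hz2⟩
      apply div_neg_of_neg_of_pos
      · apply mul_neg_of_neg_of_pos
        · apply mul_neg_of_pos_of_neg (mul_pos (by norm_num) (by linarith)) (by linarith)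
        · exact pow_pos (by linarith) 3
      · have h2 : (0:ℝ) < 2 - z := by linarith
        have h1 : (0:ℝ) < 1 + z := by linarith
        positivity
    · rw [hf' 0]; norm_num
    · rw [hf' (9/10)]; norm_num
  · -- m = 6
    have hc : (2:ℝ) / (((6:ℕ):ℝ) - 1) = 2/5 := by norm_num
    rw [hc]
    have hf' : ∀ z : ℝ, f z = (2 / (2 - z)) ^ 4 * (2 / (2 + z)) ^ 2 * (1 - z) := by
      intro z; rw [hf z]; norm_num
    have heq : ∀ x ∈ Set.Ioo (-1:ℝ) 1, f x = 64 * (1 - x) / ((2 - x) ^ 4 * (2 + x) ^ 2) := by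
      rintro x ⟨hx1, hx2⟩
      have h2 : (2:ℝ) - x ≠ 0 := by linarith
      have h1 : (2:ℝ) + x ≠ 0 := by linarith
      rw [hf' x]; field_simp
      norm_num
    refine shape_aux f (2/5) (by norm_num) (by norm_num)
      (fun z => 64 * z * (2 - 5*z) * ((2 - z) ^ 3 * (2 + z)) / ((2 - z) ^ 4 * (2 + z) ^ 2) ^ 2)
      ?_ ?_ ?_ ?_ ?_
    · rintro z ⟨hz1, hz2⟩
      have h2 : (0:ℝ) < 2 - z := by linarith
      have h1 : (0:ℝ) < 2 + z := by linarith
      have hu : HasDerivAt (fun x : ℝ => 64 * (1 - x)) (-64) z := by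
        simpa using ((hasDerivAt_id z).const_sub 1).const_mul 64
      have hA : HasDerivAt (fun x : ℝ => (2 - x) ^ 4) (4 * (2 - z) ^ 3 * (-1)) z := by
        simpa using ((hasDerivAt_id z).const_sub 2).fun_pow 4
      have hB : HasDerivAt (fun x : ℝ => (2 + x) ^ 2) (2 * (2 + z) ^ 1 * 1) z := by
        simpa using ((hasDerivAt_id z).const_add 2).fun_pow 2
      have hv := hA.mul hB
      have hvne : (2 - z) ^ 4 * (2 + z) ^ 2 ≠ 0 := by positivity
      have hg := hu.div hv hvne
      have hg' : HasDerivAt (fun x : ℝ => 64 * (1 - x) / ((2 - x) ^ 4 * (2 + x) ^ 2))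
          (64 * z * (2 - 5*z) * ((2 - z) ^ 3 * (2 + z)) / ((2 - z) ^ 4 * (2 + z) ^ 2) ^ 2) z := by
        refine hg.congr_deriv ?_
        simp only [Pi.mul_apply]
        rw [div_eq_div_iff (by positivity) (by positivity)]
        ring
      exact hg'.congr_of_eventuallyEq
        (Filter.eventuallyEq_of_mem (Ioo_mem_nhds hz1 hz2) heq)
    · rintro z ⟨hz1, hz2⟩
      apply div_pos
      · apply mul_pos (mul_pos (mul_pos (by norm_num) hz1) (by linarith))
          (mul_pos (pow_pos (by linarith) 3) (by linarith))
      · have h2 : (0:ℝ) < 2 - z := by linarith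
        have h1 : (0:ℝ) < 2 + z := by linarith
        positivity
    · rintro z ⟨hz1, hz2⟩
      apply div_neg_of_neg_of_pos
      · apply mul_neg_of_neg_of_pos
        · apply mul_neg_of_pos_of_neg (mul_pos (by norm_num) (by linarith)) (by linarith)
        · exact mul_pos (pow_pos (by linarith) 3) (by linarith)
      · have h2 : (0:ℝ) < 2 - z := by linarith
        have h1 : (0:ℝ) < 2 + z := by linarith
        positivity
    · rw [hf' 0]; norm_num
    · rw [hf' (9/10)]; norm_num
end
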